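/- For complex matrices A, B ∈ M_n(ℂ), the L²-operator norm of the Hadamard (Schur, entrywise) product satisfies ‖A ⊙ B‖ ≤ ‖A‖·‖B‖. -/

import Mathlib

open Matrix Finset
open scoped Matrix Matrix.Norms.L2Operator

private lemma sumsq_eq (n : ℕ) (v : Fin n → ℂ) :
    ∑ k, ‖v k‖ ^ 2 = ‖(WithLp.equiv 2 (Fin n → ℂ)).symm v‖ ^ 2 := by
  rw [EuclideanSpace.norm_eq, Real.sq_sqrt (by positivity)]
  rfl

private lemma mulVec_sumsq_le (n : ℕ) (A : Matrix (Fin n) (Fin n) ℂ) (v : Fin n → ℂ) :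
    ∑ k, ‖(A *ᵥ v) k‖ ^ 2 ≤ ‖A‖ ^ 2 * ∑ j, ‖v j‖ ^ 2 := by
  rw [sumsq_eq, sumsq_eq, ← mul_pow]
  have := A.l2_opNorm_mulVec ((WithLp.equiv 2 (Fin n → ℂ)).symm v)
  exact pow_le_pow_left₀ (norm_nonneg _) this 2

private lemma col_sumsq_le (n : ℕ) (B : Matrix (Fin n) (Fin n) ℂ) (j : Fin n) :
    ∑ i, ‖B i j‖ ^ 2 ≤ ‖B‖ ^ 2 := by
  have h := mulVec_sumsq_le n B (Pi.single j 1)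
  have h1 : ∑ k, ‖(Pi.single j 1 : Fin n → ℂ) k‖ ^ 2 = 1 := by
    rw [Finset.sum_eq_single j]
    · simp
    · intro k _ hk; simp [Pi.single_apply, hk]
    · simp
  have h2 : ∀ i, (B *ᵥ Pi.single j (1:ℂ)) i = B i j := by
    intro i; simp [mulVec_single]
  simp only [h2, h1, mul_one] at h
  exact h

/-- For complex matrices `A, B ∈ Mₙ(ℂ)`, the L²-operator norm of the Hadamard (Schur)
product satisfies `‖A ⊙ B‖ ≤ ‖A‖ * ‖B‖`. -/
theorem stmt_3 (n : ℕ) (A B : Matrix (Fin n) (Fin n) ℂ) :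
    ‖A ⊙ B‖ ≤ ‖A‖ * ‖B‖ := by
  rw [l2_opNorm_def]
  refine ContinuousLinearMap.opNorm_le_bound _
    (mul_nonneg (norm_nonneg A) (norm_nonneg B)) fun x => ?_
  set x' : Fin n → ℂ := WithLp.equiv 2 (Fin n → ℂ) x with hx'
  have key : ∑ i, ‖((A ⊙ B) *ᵥ x') i‖ ^ 2 ≤ (‖A‖ * ‖B‖) ^ 2 * ∑ j, ‖x' j‖ ^ 2 := by
    calc ∑ i, ‖((A ⊙ B) *ᵥ x') i‖ ^ 2
        = ∑ i, ‖(A *ᵥ (fun j => B i j * x' j)) i‖ ^ 2 := by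
          refine Finset.sum_congr rfl fun i _ => ?_
          simp only [mulVec, dotProduct, hadamard_apply, mul_assoc]
      _ ≤ ∑ i, ∑ k, ‖(A *ᵥ (fun j => B i j * x' j)) k‖ ^ 2 :=
          Finset.sum_le_sum fun i _ =>
            Finset.single_le_sum (f := fun k => ‖(A *ᵥ (fun j => B i j * x' j)) k‖ ^ 2)
              (fun k _ => by positivity) (Finset.mem_univ i)
      _ ≤ ∑ i, ‖A‖ ^ 2 * ∑ j, ‖B i j * x' j‖ ^ 2 :=
          Finset.sum_le_sum fun i _ => mulVec_sumsq_le n A _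
      _ = ‖A‖ ^ 2 * ∑ j, (∑ i, ‖B i j‖ ^ 2) * ‖x' j‖ ^ 2 := by
          rw [← Finset.mul_sum, Finset.sum_comm]
          simp only [norm_mul, mul_pow, Finset.sum_mul]
      _ ≤ ‖A‖ ^ 2 * ∑ j, ‖B‖ ^ 2 * ‖x' j‖ ^ 2 := by
          gcongr with j _
          exact col_sumsq_le n B j
      _ = (‖A‖ * ‖B‖) ^ 2 * ∑ j, ‖x' j‖ ^ 2 := by
          rw [← Finset.mul_sum]; ring
  have hL : ∑ i, ‖((A ⊙ B) *ᵥ x') i‖ ^ 2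
      = ‖(toEuclideanLin ≪≫ₗ LinearMap.toContinuousLinearMap) (A ⊙ B) x‖ ^ 2 :=
    sumsq_eq n _
  have hR : ∑ j, ‖x' j‖ ^ 2 = ‖x‖ ^ 2 := sumsq_eq n x'
  rw [hL, hR, ← mul_pow] at key
  exact (pow_le_pow_iff_left₀ (norm_nonneg _) (by positivity) two_ne_zero).mp key
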